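/- arXiv:2409.11809 — 2 statements merged into one kernel-verified Lean document; each statement's English description precedes it below -/
import Mathlib

section
/- Korn's type inequality on the channel with tangency boundary condition: Let u : ℝ³ → ℝ³ be twice continuously differentiable on a neighborhood of [0,1]×ℝ², 1-periodic in the coordinates x₂ and x₃, and satisfy the tangency condition u₁(0,x₂,x₃) = u₁(1,x₂,x₃) = 0 for all x₂,x₃. Then ∫_{(0,1)³} |∇u(x)|² dx ≤ (1/2) ∫_{(0,1)³} |∇u(x) + ∇u(x)ᵀ − (2/3)(div u)(x)·I₃|² dx, where |·| denotes the Frobenius norm of a 3×3 matrix. -/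
open MeasureTheory

/-- Standard basis vectors of `ℝ × ℝ × ℝ`. -/
noncomputable def e3 : Fin 3 → ℝ × ℝ × ℝ := ![(1, 0, 0), (0, 1, 0), (0, 0, 1)]

/-- The `j`-th partial derivative of a scalar function on `ℝ³`. -/
noncomputable def pd (j : Fin 3) (f : ℝ × ℝ × ℝ → ℝ) (x : ℝ × ℝ × ℝ) : ℝ :=
  fderiv ℝ f x (e3 j)

/-- The Jacobian matrix `(∇u)ᵢⱼ = ∂ⱼuᵢ` of a vector field `u = (u₀,u₁,u₂)`. -/
noncomputable def jac (u : Fin 3 → ℝ × ℝ × ℝ → ℝ) (x : ℝ × ℝ × ℝ) :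
    Matrix (Fin 3) (Fin 3) ℝ :=
  Matrix.of fun i j => pd j (u i) x

/-- The divergence `div u = ∂₁u₁ + ∂₂u₂ + ∂₃u₃`. -/
noncomputable def divg (u : Fin 3 → ℝ × ℝ × ℝ → ℝ) (x : ℝ × ℝ × ℝ) : ℝ :=
  ∑ i, pd i (u i) x

/-- The squared Frobenius norm of a 3×3 real matrix. -/
def frobSq (M : Matrix (Fin 3) (Fin 3) ℝ) : ℝ := ∑ i, ∑ j, (M i j) ^ 2

/-- The open unit cube `(0,1)³`, modelling the channel `(0,1)×𝕋²`. -/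
def cube : Set (ℝ × ℝ × ℝ) :=
  Set.Ioo (0 : ℝ) 1 ×ˢ (Set.Ioo (0 : ℝ) 1 ×ˢ Set.Ioo (0 : ℝ) 1)

/-- The closed strip `[0,1] × ℝ²`. -/
def strip : Set (ℝ × ℝ × ℝ) := Set.Icc (0 : ℝ) 1 ×ˢ (Set.univ : Set (ℝ × ℝ))

lemma e3_zero : e3 0 = (1,0,0) := rfl
lemma e3_one : e3 1 = (0,1,0) := rfl
lemma e3_two : e3 2 = (0,0,1) := rfl

lemma cube_restrict : (volume : Measure (ℝ×ℝ×ℝ)).restrict cube =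
    (volume.restrict (Set.Ioo (0:ℝ) 1)).prod
      ((volume.restrict (Set.Ioo (0:ℝ) 1)).prod (volume.restrict (Set.Ioo (0:ℝ) 1))) := by
  rw [Measure.prod_restrict, Measure.prod_restrict]
  rfl

lemma integrableOn_cube {U : Set (ℝ×ℝ×ℝ)} (hUs : strip ⊆ U) {f : ℝ×ℝ×ℝ → ℝ}
    (hf : ContinuousOn f U) : IntegrableOn f cube := by
  have hK : IsCompact (Set.Icc (0:ℝ) 1 ×ˢ (Set.Icc (0:ℝ) 1 ×ˢ Set.Icc (0:ℝ) 1)) :=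
    isCompact_Icc.prod (isCompact_Icc.prod isCompact_Icc)
  have hKU : (Set.Icc (0:ℝ) 1 ×ˢ (Set.Icc (0:ℝ) 1 ×ˢ Set.Icc (0:ℝ) 1)) ⊆ U :=
    fun p hp => hUs ⟨hp.1, Set.mem_univ _⟩
  exact ((hf.mono hKU).integrableOn_compact hK).mono_set
    (fun p hp => ⟨Set.Ioo_subset_Icc_self hp.1,
      Set.Ioo_subset_Icc_self hp.2.1, Set.Ioo_subset_Icc_self hp.2.2⟩)

lemma contOn_pd {U : Set (ℝ×ℝ×ℝ)} (hU : IsOpen U) {f : ℝ×ℝ×ℝ → ℝ} {j : Fin 3}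
    (hf : ContDiffOn ℝ 1 f U) : ContinuousOn (pd j f) U :=
  (hf.continuousOn_fderiv_of_isOpen hU le_rfl).clm_apply continuousOn_const

lemma contDiffOn_pd {U : Set (ℝ×ℝ×ℝ)} (hU : IsOpen U) {f : ℝ×ℝ×ℝ → ℝ} {j : Fin 3}
    (hf : ContDiffOn ℝ 2 f U) : ContDiffOn ℝ 1 (pd j f) U :=
  (hf.fderiv_of_isOpen hU (by norm_num)).clm_apply contDiffOn_const

lemma slice0 {f : ℝ×ℝ×ℝ → ℝ} {t y z : ℝ} (hf : DifferentiableAt ℝ f (t, y, z)) :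
    HasDerivAt (fun s => f (s, y, z)) (pd 0 f (t, y, z)) t := by
  have hι : HasDerivAt (fun s : ℝ => ((s, y, z) : ℝ×ℝ×ℝ)) (((1:ℝ), (0:ℝ), (0:ℝ))) t :=
    HasDerivAt.prodMk (hasDerivAt_id t) (HasDerivAt.prodMk (hasDerivAt_const t y) (hasDerivAt_const t z))
  exact hf.hasFDerivAt.comp_hasDerivAt t hι

lemma slice1 {f : ℝ×ℝ×ℝ → ℝ} {x t z : ℝ} (hf : DifferentiableAt ℝ f (x, t, z)) :
    HasDerivAt (fun s => f (x, s, z)) (pd 1 f (x, t, z)) t := by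
  have hι : HasDerivAt (fun s : ℝ => ((x, s, z) : ℝ×ℝ×ℝ)) (((0:ℝ), (1:ℝ), (0:ℝ))) t :=
    HasDerivAt.prodMk (hasDerivAt_const t x) (HasDerivAt.prodMk (hasDerivAt_id t) (hasDerivAt_const t z))
  exact hf.hasFDerivAt.comp_hasDerivAt t hι

lemma slice2 {f : ℝ×ℝ×ℝ → ℝ} {x y t : ℝ} (hf : DifferentiableAt ℝ f (x, y, t)) :
    HasDerivAt (fun s => f (x, y, s)) (pd 2 f (x, y, t)) t := by
  have hι : HasDerivAt (fun s : ℝ => ((x, y, s) : ℝ×ℝ×ℝ)) (((0:ℝ), (0:ℝ), (1:ℝ))) t :=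
    HasDerivAt.prodMk (hasDerivAt_const t x) (HasDerivAt.prodMk (hasDerivAt_const t y) (hasDerivAt_id t))
  exact hf.hasFDerivAt.comp_hasDerivAt t hι

lemma integral_Ioo_deriv (F F' : ℝ → ℝ) (hF : ∀ t ∈ Set.Icc (0:ℝ) 1, HasDerivAt F (F' t) t)
    (hc : ContinuousOn F' (Set.Icc 0 1)) : ∫ t in Set.Ioo (0:ℝ) 1, F' t = F 1 - F 0 := by
  rw [← integral_Ioc_eq_integral_Ioo, ← intervalIntegral.integral_of_le zero_le_one]
  exact intervalIntegral.integral_eq_sub_of_hasDerivAt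
    (fun t ht => hF t (by rwa [Set.uIcc_of_le zero_le_one] at ht))
    (ContinuousOn.intervalIntegrable (by rwa [Set.uIcc_of_le zero_le_one]))

lemma mem_U_of_strip {U : Set (ℝ×ℝ×ℝ)} (hUs : strip ⊆ U) {t : ℝ} (y z : ℝ)
    (ht : t ∈ Set.Icc (0:ℝ) 1) : ((t,y,z) : ℝ×ℝ×ℝ) ∈ U := hUs ⟨ht, Set.mem_univ _⟩

lemma two_restrict : (volume.restrict (Set.Ioo (0:ℝ) 1)).prod (volume.restrict (Set.Ioo (0:ℝ) 1))
    = (volume : Measure (ℝ×ℝ)).restrict (Set.Ioo (0:ℝ) 1 ×ˢ Set.Ioo (0:ℝ) 1) := by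
  rw [Measure.prod_restrict]; rfl

lemma vanish0 {U : Set (ℝ×ℝ×ℝ)} (hU : IsOpen U) (hUs : strip ⊆ U)
    {g : ℝ×ℝ×ℝ → ℝ} (hg : ContDiffOn ℝ 1 g U)
    (hb : ∀ y z : ℝ, g (1,y,z) = g (0,y,z)) :
    ∫ x in cube, pd 0 g x = 0 := by
  have hcont : ContinuousOn (pd 0 g) U := contOn_pd hU hg
  have hdiff : ∀ p ∈ U, DifferentiableAt ℝ g p := fun p hp =>
    (hg.contDiffAt (hU.mem_nhds hp)).differentiableAt one_ne_zero
  have hint : IntegrableOn (pd 0 g) cube := integrableOn_cube hUs hcont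
  have h1 : (∫ x in cube, pd 0 g x) = ∫ x, pd 0 g x
      ∂((volume.restrict (Set.Ioo (0:ℝ) 1)).prod
        ((volume.restrict (Set.Ioo (0:ℝ) 1)).prod (volume.restrict (Set.Ioo (0:ℝ) 1)))) := by
    rw [cube_restrict]
  rw [h1, integral_prod_symm _ (by rw [← cube_restrict]; exact hint)]
  have inner : ∀ w : ℝ × ℝ, (∫ t in Set.Ioo (0:ℝ) 1, pd 0 g (t, w)) = 0 := by
    intro w
    have hF : ∀ t ∈ Set.Icc (0:ℝ) 1, HasDerivAt (fun s => g (s, w.1, w.2))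
        (pd 0 g (t, w.1, w.2)) t := fun t ht =>
      slice0 (hdiff _ (mem_U_of_strip hUs w.1 w.2 ht))
    have hc : ContinuousOn (fun t => pd 0 g (t, w.1, w.2)) (Set.Icc 0 1) :=
      hcont.comp ((continuous_id.prodMk continuous_const).continuousOn)
        (fun t ht => mem_U_of_strip hUs w.1 w.2 ht)
    have h2 := integral_Ioo_deriv _ _ hF hc
    show (∫ t in Set.Ioo (0:ℝ) 1, pd 0 g (t, w.1, w.2)) = 0
    rw [h2, hb w.1 w.2, sub_self]
  simp only [inner, integral_zero]

lemma vanish2 {U : Set (ℝ×ℝ×ℝ)} (hU : IsOpen U) (hUs : strip ⊆ U)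
    {g : ℝ×ℝ×ℝ → ℝ} (hg : ContDiffOn ℝ 1 g U)
    (hb : ∀ x y : ℝ, x ∈ Set.Icc (0:ℝ) 1 → g (x,y,1) = g (x,y,0)) :
    ∫ x in cube, pd 2 g x = 0 := by
  have hcont : ContinuousOn (pd 2 g) U := contOn_pd hU hg
  have hdiff : ∀ p ∈ U, DifferentiableAt ℝ g p := fun p hp =>
    (hg.contDiffAt (hU.mem_nhds hp)).differentiableAt one_ne_zero
  have hint : IntegrableOn (pd 2 g) cube := integrableOn_cube hUs hcont
  have h1 : (∫ x in cube, pd 2 g x) = ∫ x, pd 2 g x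
      ∂((volume.restrict (Set.Ioo (0:ℝ) 1)).prod
        ((volume.restrict (Set.Ioo (0:ℝ) 1)).prod (volume.restrict (Set.Ioo (0:ℝ) 1)))) := by
    rw [cube_restrict]
  rw [h1, integral_prod _ (by rw [← cube_restrict]; exact hint)]
  have inner : ∀ x ∈ Set.Ioo (0:ℝ) 1, (∫ w : ℝ × ℝ, pd 2 g (x, w)
      ∂((volume.restrict (Set.Ioo (0:ℝ) 1)).prod (volume.restrict (Set.Ioo (0:ℝ) 1)))) = 0 := by
    intro x hx
    have hx' : x ∈ Set.Icc (0:ℝ) 1 := Set.Ioo_subset_Icc_self hx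
    have hslice : Integrable (fun w : ℝ×ℝ => pd 2 g (x, w))
        ((volume.restrict (Set.Ioo (0:ℝ) 1)).prod (volume.restrict (Set.Ioo (0:ℝ) 1))) := by
      rw [two_restrict]
      apply IntegrableOn.mono_set (t := Set.Icc (0:ℝ) 1 ×ˢ Set.Icc (0:ℝ) 1)
      · apply ContinuousOn.integrableOn_compact (isCompact_Icc.prod isCompact_Icc)
        exact hcont.comp ((continuous_const.prodMk continuous_id).continuousOn)
          (fun w _ => mem_U_of_strip hUs w.1 w.2 hx')
      · exact fun w hw => ⟨Set.Ioo_subset_Icc_self hw.1, Set.Ioo_subset_Icc_self hw.2⟩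
    rw [integral_prod _ hslice]
    have inner2 : ∀ y : ℝ, (∫ t in Set.Ioo (0:ℝ) 1, pd 2 g (x, y, t)) = 0 := by
      intro y
      have hF : ∀ t ∈ Set.Icc (0:ℝ) 1, HasDerivAt (fun s => g (x, y, s))
          (pd 2 g (x, y, t)) t := fun t ht =>
        slice2 (hdiff _ (mem_U_of_strip hUs y t hx'))
      have hc : ContinuousOn (fun t => pd 2 g (x, y, t)) (Set.Icc 0 1) :=
        hcont.comp ((continuous_const.prodMk
          (continuous_const.prodMk continuous_id)).continuousOn)
          (fun t _ => mem_U_of_strip hUs y t hx')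
      have h2 := integral_Ioo_deriv _ _ hF hc
      rw [h2, hb x y hx', sub_self]
    simp only [inner2, integral_zero]
  rw [setIntegral_congr_fun measurableSet_Ioo inner]
  simp

lemma vanish1 {U : Set (ℝ×ℝ×ℝ)} (hU : IsOpen U) (hUs : strip ⊆ U)
    {g : ℝ×ℝ×ℝ → ℝ} (hg : ContDiffOn ℝ 1 g U)
    (hb : ∀ x z : ℝ, x ∈ Set.Icc (0:ℝ) 1 → g (x,1,z) = g (x,0,z)) :
    ∫ x in cube, pd 1 g x = 0 := by
  have hcont : ContinuousOn (pd 1 g) U := contOn_pd hU hg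
  have hdiff : ∀ p ∈ U, DifferentiableAt ℝ g p := fun p hp =>
    (hg.contDiffAt (hU.mem_nhds hp)).differentiableAt one_ne_zero
  have hint : IntegrableOn (pd 1 g) cube := integrableOn_cube hUs hcont
  have h1 : (∫ x in cube, pd 1 g x) = ∫ x, pd 1 g x
      ∂((volume.restrict (Set.Ioo (0:ℝ) 1)).prod
        ((volume.restrict (Set.Ioo (0:ℝ) 1)).prod (volume.restrict (Set.Ioo (0:ℝ) 1)))) := by
    rw [cube_restrict]
  rw [h1, integral_prod _ (by rw [← cube_restrict]; exact hint)]
  have inner : ∀ x ∈ Set.Ioo (0:ℝ) 1, (∫ w : ℝ × ℝ, pd 1 g (x, w)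
      ∂((volume.restrict (Set.Ioo (0:ℝ) 1)).prod (volume.restrict (Set.Ioo (0:ℝ) 1)))) = 0 := by
    intro x hx
    have hx' : x ∈ Set.Icc (0:ℝ) 1 := Set.Ioo_subset_Icc_self hx
    have hslice : Integrable (fun w : ℝ×ℝ => pd 1 g (x, w))
        ((volume.restrict (Set.Ioo (0:ℝ) 1)).prod (volume.restrict (Set.Ioo (0:ℝ) 1))) := by
      rw [two_restrict]
      apply IntegrableOn.mono_set (t := Set.Icc (0:ℝ) 1 ×ˢ Set.Icc (0:ℝ) 1)
      · apply ContinuousOn.integrableOn_compact (isCompact_Icc.prod isCompact_Icc)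
        exact hcont.comp ((continuous_const.prodMk continuous_id).continuousOn)
          (fun w _ => mem_U_of_strip hUs w.1 w.2 hx')
      · exact fun w hw => ⟨Set.Ioo_subset_Icc_self hw.1, Set.Ioo_subset_Icc_self hw.2⟩
    rw [integral_prod_symm _ hslice]
    have inner2 : ∀ z : ℝ, (∫ t in Set.Ioo (0:ℝ) 1, pd 1 g (x, t, z)) = 0 := by
      intro z
      have hF : ∀ t ∈ Set.Icc (0:ℝ) 1, HasDerivAt (fun s => g (x, s, z))
          (pd 1 g (x, t, z)) t := fun t ht =>
        slice1 (hdiff _ (mem_U_of_strip hUs t z hx'))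
      have hc : ContinuousOn (fun t => pd 1 g (x, t, z)) (Set.Icc 0 1) :=
        hcont.comp ((continuous_const.prodMk
          (continuous_id.prodMk continuous_const)).continuousOn)
          (fun t _ => mem_U_of_strip hUs t z hx')
      have h2 := integral_Ioo_deriv _ _ hF hc
      rw [h2, hb x z hx', sub_self]
    simp only [inner2, integral_zero]
  rw [setIntegral_congr_fun measurableSet_Ioo inner]
  simp

lemma pd_mul {f g : ℝ×ℝ×ℝ → ℝ} {x : ℝ×ℝ×ℝ} (j : Fin 3)
    (hf : DifferentiableAt ℝ f x) (hg : DifferentiableAt ℝ g x) :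
    pd j (fun y => f y * g y) x = f x * pd j g x + g x * pd j f x := by
  unfold pd
  rw [fderiv_fun_mul hf hg]
  simp [smul_eq_mul]

lemma diff_pd {f : ℝ×ℝ×ℝ → ℝ} {x : ℝ×ℝ×ℝ} (i : Fin 3) (hf : ContDiffAt ℝ 2 f x) :
    DifferentiableAt ℝ (pd i f) x :=
  ((hf.fderiv_right (m := 1) (by norm_num)).differentiableAt one_ne_zero).clm_apply
    (differentiableAt_const _)

lemma pd_pd {f : ℝ×ℝ×ℝ → ℝ} {x : ℝ×ℝ×ℝ} (i j : Fin 3) (hf : ContDiffAt ℝ 2 f x) :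
    pd j (pd i f) x = fderiv ℝ (fderiv ℝ f) x (e3 j) (e3 i) := by
  unfold pd
  have hd : DifferentiableAt ℝ (fderiv ℝ f) x :=
    (hf.fderiv_right (m := 1) (by norm_num)).differentiableAt one_ne_zero
  rw [fderiv_clm_apply hd (differentiableAt_const _)]
  simp

lemma pd_comm {f : ℝ×ℝ×ℝ → ℝ} {x : ℝ×ℝ×ℝ} (i j : Fin 3) (hf : ContDiffAt ℝ 2 f x) :
    pd j (pd i f) x = pd i (pd j f) x := by
  rw [pd_pd i j hf, pd_pd j i hf]
  exact (hf.isSymmSndFDerivAt (by simp)) _ _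

lemma fderiv_shift {f : ℝ×ℝ×ℝ → ℝ} (e p : ℝ×ℝ×ℝ) (hper : ∀ x, f (x + e) = f x)
    (h2 : DifferentiableAt ℝ f (p + e)) : fderiv ℝ f (p + e) = fderiv ℝ f p := by
  have ht : HasFDerivAt (fun q : ℝ×ℝ×ℝ => q + e) (ContinuousLinearMap.id ℝ (ℝ×ℝ×ℝ)) p :=
    (hasFDerivAt_id p).add_const e
  have h := h2.hasFDerivAt.comp p ht
  have heq : (f ∘ fun q : ℝ×ℝ×ℝ => q + e) = f := funext fun q => hper q
  rw [heq] at h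
  simpa using h.fderiv.symm

lemma pd_shift {f : ℝ×ℝ×ℝ → ℝ} (k : Fin 3) (e p : ℝ×ℝ×ℝ) (hper : ∀ x, f (x + e) = f x)
    (h2 : DifferentiableAt ℝ f (p + e)) : pd k f (p + e) = pd k f p := by
  unfold pd; rw [fderiv_shift e p hper h2]

lemma pd_face_zero {f : ℝ×ℝ×ℝ → ℝ} {a : ℝ} (hf : ∀ y z : ℝ, f (a, y, z) = 0)
    (y z : ℝ) (hd : DifferentiableAt ℝ f (a, y, z)) (i : Fin 3) (hi : i ≠ 0) :
    pd i f (a, y, z) = 0 := by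
  fin_cases i
  · exact absurd rfl hi
  · have h := slice1 hd
    rw [show (fun s => f (a, s, z)) = fun _ => (0:ℝ) from funext fun s => hf s z] at h
    exact h.unique (hasDerivAt_const y 0)
  · have h := slice2 hd
    rw [show (fun s => f (a, y, s)) = fun _ => (0:ℝ) from funext fun s => hf y s] at h
    exact h.unique (hasDerivAt_const z 0)

lemma cube_subset_strip : cube ⊆ strip :=
  fun p hp => ⟨Set.Ioo_subset_Icc_self hp.1, Set.mem_univ _⟩

lemma cube_meas : MeasurableSet cube :=
  measurableSet_Ioo.prod (measurableSet_Ioo.prod measurableSet_Ioo)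

/-- **Korn's type inequality on the channel with tangency boundary condition.**
If `u` is twice continuously differentiable on a neighborhood of `[0,1]×ℝ²`,
`1`-periodic in `x₂, x₃`, and its first component vanishes on the faces
`x₁ = 0` and `x₁ = 1`, then
`∫ |∇u|² ≤ (1/2) ∫ |∇u + ∇uᵀ − (2/3)(div u)·I₃|²` over `(0,1)³`. -/
theorem korn_channel
    (u : Fin 3 → ℝ × ℝ × ℝ → ℝ)
    (U : Set (ℝ × ℝ × ℝ)) (hU : IsOpen U) (hUs : strip ⊆ U)
    (hreg : ∀ i, ContDiffOn ℝ 2 (u i) U)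
    (hper2 : ∀ i, ∀ x : ℝ × ℝ × ℝ, u i (x.1, x.2.1 + 1, x.2.2) = u i x)
    (hper3 : ∀ i, ∀ x : ℝ × ℝ × ℝ, u i (x.1, x.2.1, x.2.2 + 1) = u i x)
    (hbc0 : ∀ y z : ℝ, u 0 (0, y, z) = 0)
    (hbc1 : ∀ y z : ℝ, u 0 (1, y, z) = 0) :
    ∫ x in cube, frobSq (jac u x) ≤
      (1 / 2) * ∫ x in cube,
        frobSq (jac u x + (jac u x).transpose
          - ((2 / 3) * divg u x) • (1 : Matrix (Fin 3) (Fin 3) ℝ)) := by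
  have hCAt : ∀ (m : Fin 3), ∀ p ∈ U, ContDiffAt ℝ 2 (u m) p := fun m p hp =>
    (hreg m).contDiffAt (hU.mem_nhds hp)
  have hdiffU : ∀ (m : Fin 3), ∀ p ∈ U, DifferentiableAt ℝ (u m) p := fun m p hp =>
    (hCAt m p hp).differentiableAt two_ne_zero
  have hcontA : ∀ (m k : Fin 3), ContinuousOn (pd k (u m)) U := fun m k =>
    contOn_pd hU ((hreg m).of_le one_le_two)
  -- integrability of the basic quantities
  have hQc : ContinuousOn (fun x => frobSq (jac u x)) U := by
    simp only [frobSq, jac, Matrix.of_apply]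
    exact continuousOn_finset_sum _ fun i _ =>
      continuousOn_finset_sum _ fun j _ => (hcontA i j).pow 2
  have hCc : ContinuousOn (fun x => ∑ i, ∑ j, pd j (u i) x * pd i (u j) x) U :=
    continuousOn_finset_sum _ fun i _ =>
      continuousOn_finset_sum _ fun j _ => (hcontA i j).mul (hcontA j i)
  have hDc : ContinuousOn (fun x => (divg u x)^2) U := by
    simp only [divg]
    exact (continuousOn_finset_sum _ fun i _ => hcontA i i).pow 2
  have hQint : IntegrableOn (fun x => frobSq (jac u x)) cube := integrableOn_cube hUs hQc
  have hCint : IntegrableOn (fun x => ∑ i, ∑ j, pd j (u i) x * pd i (u j) x) cube :=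
    integrableOn_cube hUs hCc
  have hDint : IntegrableOn (fun x => (divg u x)^2) cube := integrableOn_cube hUs hDc
  have hABint : ∀ i j k l : Fin 3,
      IntegrableOn (fun x => pd j (u i) x * pd l (u k) x) cube := fun i j k l =>
    integrableOn_cube hUs ((hcontA i j).mul (hcontA k l))
  -- pointwise algebraic identity
  have hpt : ∀ x : ℝ×ℝ×ℝ,
      (1/2) * frobSq (jac u x + (jac u x).transpose
          - ((2/3) * divg u x) • (1 : Matrix (Fin 3) (Fin 3) ℝ)) =
      frobSq (jac u x) +
        ((∑ i, ∑ j, pd j (u i) x * pd i (u j) x) - (2/3) * (divg u x)^2) := by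
    intro x
    simp only [frobSq, jac, divg, Matrix.add_apply, Matrix.sub_apply, Matrix.transpose_apply,
      Matrix.smul_apply, Matrix.one_apply, Matrix.of_apply, Fin.sum_univ_three, smul_eq_mul]
    simp
    ring
  -- C¹ regularity of the products u m * pd k (u l)
  have hg : ∀ m k l : Fin 3, ContDiffOn ℝ 1 (fun y => u m y * pd k (u l) y) U :=
    fun m k l => ((hreg m).of_le one_le_two).mul (contDiffOn_pd hU (hreg l))
  -- boundary equalities in the periodic directions
  have hface2 : ∀ (m k l : Fin 3) (x z : ℝ), x ∈ Set.Icc (0:ℝ) 1 →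
      u m (x,1,z) * pd k (u l) (x,1,z) = u m (x,0,z) * pd k (u l) (x,0,z) := by
    intro m k l x z hx
    have hadd : ((x,(0:ℝ),z) : ℝ×ℝ×ℝ) + ((0:ℝ),(1:ℝ),(0:ℝ)) = (x,1,z) := by
      simp [Prod.ext_iff]
    have e1 : u m (x,1,z) = u m (x,0,z) := by simpa using hper2 m (x,0,z)
    have e2 : pd k (u l) (x,1,z) = pd k (u l) (x,0,z) := by
      have h := pd_shift (f := u l) k ((0:ℝ),(1:ℝ),(0:ℝ)) (x,0,z)
        (fun q => by
          rw [show q + ((0:ℝ),(1:ℝ),(0:ℝ)) = (q.1, q.2.1 + 1, q.2.2) from by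
            simp [Prod.ext_iff]]
          exact hper2 l q)
        (by rw [hadd]; exact hdiffU l _ (hUs ⟨hx, Set.mem_univ _⟩))
      rwa [hadd] at h
    rw [e1, e2]
  have hface3 : ∀ (m k l : Fin 3) (x y : ℝ), x ∈ Set.Icc (0:ℝ) 1 →
      u m (x,y,1) * pd k (u l) (x,y,1) = u m (x,y,0) * pd k (u l) (x,y,0) := by
    intro m k l x y hx
    have hadd : ((x,y,(0:ℝ)) : ℝ×ℝ×ℝ) + ((0:ℝ),(0:ℝ),(1:ℝ)) = (x,y,1) := by
      simp [Prod.ext_iff]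
    have e1 : u m (x,y,1) = u m (x,y,0) := by simpa using hper3 m (x,y,0)
    have e2 : pd k (u l) (x,y,1) = pd k (u l) (x,y,0) := by
      have h := pd_shift (f := u l) k ((0:ℝ),(0:ℝ),(1:ℝ)) (x,y,0)
        (fun q => by
          rw [show q + ((0:ℝ),(0:ℝ),(1:ℝ)) = (q.1, q.2.1, q.2.2 + 1) from by
            simp [Prod.ext_iff]]
          exact hper3 l q)
        (by rw [hadd]; exact hdiffU l _ (hUs ⟨hx, Set.mem_univ _⟩))
      rwa [hadd] at h
    rw [e1, e2]
  -- vanishing of integrals of pure derivatives of the products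
  have hvan1 : ∀ m k l : Fin 3, ∫ x in cube, pd 1 (fun y => u m y * pd k (u l) y) x = 0 :=
    fun m k l => vanish1 hU hUs (hg m k l) (fun x z hx => hface2 m k l x z hx)
  have hvan2 : ∀ m k l : Fin 3, ∫ x in cube, pd 2 (fun y => u m y * pd k (u l) y) x = 0 :=
    fun m k l => vanish2 hU hUs (hg m k l) (fun x y hx => hface3 m k l x y hx)
  have hmem0 : ∀ y z : ℝ, ((0:ℝ),y,z) ∈ U := fun y z =>
    hUs ⟨Set.left_mem_Icc.mpr zero_le_one, Set.mem_univ _⟩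
  have hmem1 : ∀ y z : ℝ, ((1:ℝ),y,z) ∈ U := fun y z =>
    hUs ⟨Set.right_mem_Icc.mpr zero_le_one, Set.mem_univ _⟩
  have hvan0a : ∀ k l : Fin 3, ∫ x in cube, pd 0 (fun y => u 0 y * pd k (u l) y) x = 0 :=
    fun k l => vanish0 hU hUs (hg 0 k l)
      (fun y z => by rw [hbc0 y z, hbc1 y z, zero_mul, zero_mul])
  have hvan0b : ∀ m k : Fin 3, k ≠ 0 →
      ∫ x in cube, pd 0 (fun y => u m y * pd k (u 0) y) x = 0 :=
    fun m k hk => vanish0 hU hUs (hg m k 0)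
      (fun y z => by
        rw [pd_face_zero hbc0 y z (hdiffU 0 _ (hmem0 y z)) k hk,
            pd_face_zero hbc1 y z (hdiffU 0 _ (hmem1 y z)) k hk, mul_zero, mul_zero])
  -- the key integration-by-parts identity
  have key : ∀ i j : Fin 3,
      (∫ x in cube, pd j (u i) x * pd i (u j) x) =
      ∫ x in cube, pd i (u i) x * pd j (u j) x := by
    intro i j
    by_cases hij : i = j
    · subst hij; rfl
    · have heqOn : Set.EqOn
          (fun x => pd j (u i) x * pd i (u j) x - pd i (u i) x * pd j (u j) x)
          (fun x => pd j (fun y => u i y * pd i (u j) y) x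
            - pd i (fun y => u i y * pd j (u j) y) x) cube := by
        intro x hx
        have hxU : x ∈ U := hUs (cube_subset_strip hx)
        have e1 : pd j (fun y => u i y * pd i (u j) y) x
            = u i x * pd j (pd i (u j)) x + pd i (u j) x * pd j (u i) x :=
          pd_mul j (hdiffU i x hxU) (diff_pd i (hCAt j x hxU))
        have e2 : pd i (fun y => u i y * pd j (u j) y) x
            = u i x * pd i (pd j (u j)) x + pd j (u j) x * pd i (u i) x :=
          pd_mul i (hdiffU i x hxU) (diff_pd j (hCAt j x hxU))
        have e3 : pd j (pd i (u j)) x = pd i (pd j (u j)) x :=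
          pd_comm i j (hCAt j x hxU)
        show pd j (u i) x * pd i (u j) x - pd i (u i) x * pd j (u j) x
          = pd j (fun y => u i y * pd i (u j) y) x
            - pd i (fun y => u i y * pd j (u j) y) x
        rw [e1, e2, e3]; ring
      have int1 : IntegrableOn (fun x => pd j (fun y => u i y * pd i (u j) y) x) cube :=
        integrableOn_cube hUs (contOn_pd hU (hg i i j))
      have int2 : IntegrableOn (fun x => pd i (fun y => u i y * pd j (u j) y) x) cube :=
        integrableOn_cube hUs (contOn_pd hU (hg i j j))
      have h3a : ∫ x in cube, pd j (fun y => u i y * pd i (u j) y) x = 0 := by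
        fin_cases j
        · exact hvan0b i i (by simpa using hij)
        · exact hvan1 i i 1
        · exact hvan2 i i 2
      have h3b : ∫ x in cube, pd i (fun y => u i y * pd j (u j) y) x = 0 := by
        fin_cases i
        · exact hvan0a j j
        · exact hvan1 1 j j
        · exact hvan2 2 j j
      have hsub : (∫ x in cube,
          (pd j (u i) x * pd i (u j) x - pd i (u i) x * pd j (u j) x)) = 0 := by
        rw [setIntegral_congr_fun cube_meas heqOn, integral_sub int1 int2, h3a, h3b, sub_zero]
      rw [integral_sub (hABint i j j i) (hABint i i j j)] at hsub
      linarith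
  -- C = D after integration
  have hCD : (∫ x in cube, ∑ i, ∑ j, pd j (u i) x * pd i (u j) x)
      = ∫ x in cube, (divg u x)^2 := by
    have hDrw : ∀ x : ℝ×ℝ×ℝ, (divg u x)^2 = ∑ i, ∑ j, pd i (u i) x * pd j (u j) x := by
      intro x; simp only [divg, sq, Finset.sum_mul_sum]
    calc (∫ x in cube, ∑ i, ∑ j, pd j (u i) x * pd i (u j) x)
        = ∑ i, ∑ j, ∫ x in cube, pd j (u i) x * pd i (u j) x := by
          rw [integral_finset_sum _ (fun i _ => integrable_finset_sum _
            (fun j _ => hABint i j j i))]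
          exact Finset.sum_congr rfl fun i _ =>
            integral_finset_sum _ (fun j _ => hABint i j j i)
      _ = ∑ i, ∑ j, ∫ x in cube, pd i (u i) x * pd j (u j) x :=
          Finset.sum_congr rfl fun i _ => Finset.sum_congr rfl fun j _ => key i j
      _ = ∫ x in cube, ∑ i, ∑ j, pd i (u i) x * pd j (u j) x := by
          rw [integral_finset_sum _ (fun i _ => integrable_finset_sum _
            (fun j _ => hABint i i j j))]
          exact Finset.sum_congr rfl fun i _ =>
            (integral_finset_sum _ (fun j _ => hABint i i j j)).symm
      _ = ∫ x in cube, (divg u x)^2 :=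
          setIntegral_congr_fun cube_meas (fun x _ => (hDrw x).symm)
  -- main computation
  have hstep1 : (1/2) * (∫ x in cube,
      frobSq (jac u x + (jac u x).transpose
        - ((2/3) * divg u x) • (1 : Matrix (Fin 3) (Fin 3) ℝ)))
      = (∫ x in cube, frobSq (jac u x))
        + ((∫ x in cube, ∑ i, ∑ j, pd j (u i) x * pd i (u j) x)
          - (2/3) * ∫ x in cube, (divg u x)^2) := by
    have hD2 : IntegrableOn (fun x : ℝ×ℝ×ℝ => (2/3) * (divg u x)^2) cube :=
      hDint.const_mul _
    have hCDint : IntegrableOn (fun x : ℝ×ℝ×ℝ =>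
        (∑ i, ∑ j, pd j (u i) x * pd i (u j) x) - (2/3) * (divg u x)^2) cube :=
      hCint.sub hD2
    rw [← integral_const_mul,
      setIntegral_congr_fun cube_meas (fun x (_ : x ∈ cube) => hpt x),
      integral_add hQint hCDint, integral_sub hCint hD2, integral_const_mul]
  have hDnn : 0 ≤ ∫ x in cube, (divg u x)^2 :=
    setIntegral_nonneg cube_meas (fun x _ => sq_nonneg _)
  linarith [hstep1, hCD, hDnn]
end

section
/- Verification of assumption (A) in the Navier-slip scaling regime (Remark 1.2): Fix positive real numbers R, ρ̄, θ̄, μ̄, κ̄ and positive constants c₁, c₄. Then there exists ε₀ > 0 such that for every ε with 0 < ε < ε₀, taking the slip coefficients a_u^I = c₁, a_θ^{II} = c₄, a_θ^I = ε and a_u^{II} = ε, assumption (A) holds; that is: (i) (16/(15R))·a_θ^I·(κ̄/θ̄)·ρ̄ − (2/(5R))·a_u^{II}·a_θ^I·(κ̄/θ̄)·ρ̄ > 0, and (ii) there exist λ₀ > 0 and λ₁ > 0 such that the symmetric 6×6 matrix M(λ₀,λ₁) defined below is positive definite. -/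
open Matrix

private lemma cons_val_five {α : Type*} {m : ℕ} (x : α)
    (u : Fin m.succ.succ.succ.succ.succ → α) :
    vecCons x u 5 = vecHead (vecTail (vecTail (vecTail (vecTail u)))) :=
  rfl

set_option maxHeartbeats 1000000 in
lemma posdef_aux (m11 m13 m14 m15 m16 m22 m23 m33 m44 m55 m56 m66 : ℝ)
    (h11 : 0 < m11) (h22 : 0 < m22) (h55 : 0 < m55)
    (h5 : 16 * m15 ^ 2 < m55 * m11)
    (h3 : 8 * m13 ^ 2 * m22 + 2 * m23 ^ 2 * m11 < m33 * m11 * m22)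
    (h4 : 8 * m14 ^ 2 < m44 * m11)
    (h6 : 8 * m16 ^ 2 * m55 + 2 * m56 ^ 2 * m11 < m66 * m11 * m55) :
    (!![m11, 0, m13, m14, m15, m16;
        0, m22, m23, 0, 0, 0;
        m13, m23, m33, 0, 0, 0;
        m14, 0, 0, m44, 0, 0;
        m15, 0, 0, 0, m55, m56;
        m16, 0, 0, 0, m56, m66]).PosDef := by
  rw [Matrix.posDef_iff_dotProduct_mulVec]
  constructor
  · ext i j
    fin_cases i <;> fin_cases j <;>
      simp [Matrix.conjTranspose_apply, cons_val_five, Matrix.vecHead, Matrix.vecTail]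
  · intro x hx
    have hne : ∃ i, x i ≠ 0 := by
      by_contra h
      push_neg at h
      exact hx (funext h)
    have hQ : dotProduct (star x)
        ((!![m11, 0, m13, m14, m15, m16;
        0, m22, m23, 0, 0, 0;
        m13, m23, m33, 0, 0, 0;
        m14, 0, 0, m44, 0, 0;
        m15, 0, 0, 0, m55, m56;
        m16, 0, 0, 0, m56, m66]) *ᵥ x)
        = m11*(x 0)^2 + m22*(x 1)^2 + m33*(x 2)^2 + m44*(x 3)^2 + m55*(x 4)^2 + m66*(x 5)^2
          + 2*m13*(x 0)*(x 2) + 2*m14*(x 0)*(x 3) + 2*m15*(x 0)*(x 4) + 2*m16*(x 0)*(x 5)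
          + 2*m23*(x 1)*(x 2) + 2*m56*(x 4)*(x 5) := by
      simp [dotProduct, Matrix.mulVec, Fin.sum_univ_six, cons_val_five,
        Matrix.vecHead, Matrix.vecTail]
      ring
    rw [hQ]
    obtain ⟨x1, x2, x3, x4, x5, x6, hx1, hx2, hx3, hx4, hx5, hx6⟩ :
        ∃ a b c d e f : ℝ, x 0 = a ∧ x 1 = b ∧ x 2 = c ∧ x 3 = d ∧ x 4 = e ∧ x 5 = f :=
      ⟨_, _, _, _, _, _, rfl, rfl, rfl, rfl, rfl, rfl⟩
    rw [hx1, hx2, hx3, hx4, hx5, hx6]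
    have hα1 : (0:ℝ) < m11 / 2 := by positivity
    have hα2 : (0:ℝ) < m22 / 2 := by positivity
    have hα3 : (0:ℝ) < m33 - 8*m13^2/m11 - 2*m23^2/m22 := by
      rw [sub_sub, sub_pos, div_add_div _ _ (ne_of_gt h11) (ne_of_gt h22),
        div_lt_iff₀ (by positivity)]
      nlinarith
    have hα4 : (0:ℝ) < m44 - 8*m14^2/m11 := by
      rw [sub_pos, div_lt_iff₀ h11]; linarith
    have hα5 : (0:ℝ) < m55/2 - 8*m15^2/m11 := by
      rw [sub_pos, div_lt_iff₀ h11]; linarith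
    have hα6 : (0:ℝ) < m66 - 8*m16^2/m11 - 2*m56^2/m55 := by
      rw [sub_sub, sub_pos, div_add_div _ _ (ne_of_gt h11) (ne_of_gt h55),
        div_lt_iff₀ (by positivity)]
      nlinarith
    have key : m11*x1^2 + m22*x2^2 + m33*x3^2 + m44*x4^2 + m55*x5^2 + m66*x6^2
          + 2*m13*x1*x3 + 2*m14*x1*x4 + 2*m15*x1*x5 + 2*m16*x1*x6
          + 2*m23*x2*x3 + 2*m56*x5*x6
        = (m11/2)*x1^2 + (m22/2)*x2^2 + (m33 - 8*m13^2/m11 - 2*m23^2/m22)*x3^2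
          + (m44 - 8*m14^2/m11)*x4^2 + (m55/2 - 8*m15^2/m11)*x5^2
          + (m66 - 8*m16^2/m11 - 2*m56^2/m55)*x6^2
          + (m11*x1 + 8*m13*x3)^2/(8*m11) + (m11*x1 + 8*m14*x4)^2/(8*m11)
          + (m11*x1 + 8*m15*x5)^2/(8*m11) + (m11*x1 + 8*m16*x6)^2/(8*m11)
          + (m22*x2 + 2*m23*x3)^2/(2*m22) + (m55*x5 + 2*m56*x6)^2/(2*m55) := by
      field_simp
      ring
    rw [key]
    have hsum : 0 < (m11/2)*x1^2 + (m22/2)*x2^2 + (m33 - 8*m13^2/m11 - 2*m23^2/m22)*x3^2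
          + (m44 - 8*m14^2/m11)*x4^2 + (m55/2 - 8*m15^2/m11)*x5^2
          + (m66 - 8*m16^2/m11 - 2*m56^2/m55)*x6^2 := by
      obtain ⟨i, hi⟩ := hne
      have n1 : 0 ≤ (m11/2)*x1^2 := mul_nonneg hα1.le (sq_nonneg x1)
      have n2 : 0 ≤ (m22/2)*x2^2 := mul_nonneg hα2.le (sq_nonneg x2)
      have n3 : 0 ≤ (m33 - 8*m13^2/m11 - 2*m23^2/m22)*x3^2 := mul_nonneg hα3.le (sq_nonneg x3)
      have n4 : 0 ≤ (m44 - 8*m14^2/m11)*x4^2 := mul_nonneg hα4.le (sq_nonneg x4)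
      have n5 : 0 ≤ (m55/2 - 8*m15^2/m11)*x5^2 := mul_nonneg hα5.le (sq_nonneg x5)
      have n6 : 0 ≤ (m66 - 8*m16^2/m11 - 2*m56^2/m55)*x6^2 := mul_nonneg hα6.le (sq_nonneg x6)
      fin_cases i
      · replace hi : x1 ≠ 0 := by rw [← hx1]; exact hi
        have := mul_pos hα1 (pow_two_pos_of_ne_zero hi); linarith
      · replace hi : x2 ≠ 0 := by rw [← hx2]; exact hi
        have := mul_pos hα2 (pow_two_pos_of_ne_zero hi); linarith
      · replace hi : x3 ≠ 0 := by rw [← hx3]; exact hi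
        have := mul_pos hα3 (pow_two_pos_of_ne_zero hi); linarith
      · replace hi : x4 ≠ 0 := by rw [← hx4]; exact hi
        have := mul_pos hα4 (pow_two_pos_of_ne_zero hi); linarith
      · replace hi : x5 ≠ 0 := by rw [← hx5]; exact hi
        have := mul_pos hα5 (pow_two_pos_of_ne_zero hi); linarith
      · replace hi : x6 ≠ 0 := by rw [← hx6]; exact hi
        have := mul_pos hα6 (pow_two_pos_of_ne_zero hi); linarith
    have t1 : 0 ≤ (m11*x1 + 8*m13*x3)^2/(8*m11) := by positivity
    have t2 : 0 ≤ (m11*x1 + 8*m14*x4)^2/(8*m11) := by positivity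
    have t3 : 0 ≤ (m11*x1 + 8*m15*x5)^2/(8*m11) := by positivity
    have t4 : 0 ≤ (m11*x1 + 8*m16*x6)^2/(8*m11) := by positivity
    have t5 : 0 ≤ (m22*x2 + 2*m23*x3)^2/(2*m22) := by positivity
    have t6 : 0 ≤ (m55*x5 + 2*m56*x6)^2/(2*m55) := by positivity
    linarith

noncomputable def slipMatrix (R ρ θ μ κ auI auII atI atII l0 l1 : ℝ) :
    Matrix (Fin 6) (Fin 6) ℝ :=
  let m11 : ℝ := R * θ
  let m13 : ℝ := (1 / 2) * R * ρ + (l0 / 2) * R * (4 / (5 * R ^ 2)) * auII * atI * κ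
  let m14 : ℝ := (l0 / 2) * R * (4 / (5 * R ^ 2)) * auII * atI * κ
  let m15 : ℝ := (1 / 2) * μ
  let m16 : ℝ := (l1 / 2) * R * (4 / (5 * R ^ 2)) * auII * atI * κ
  let m22 : ℝ := l0 * (2 / (3 * R)) * Real.sqrt (2 / R) * auI * auII * μ ^ 2 / Real.sqrt θ
  let m23 : ℝ := l0 * (2 / (5 * R ^ 2)) * auII * atI * κ / θ
  let m33 : ℝ :=
    l0 * (32 / (75 * R ^ 2)) * Real.sqrt (2 / R) * atI * atII * κ ^ 2 / (θ * Real.sqrt θ)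
  let m44 : ℝ := l0 * (16 / (15 * R)) * atI * (κ / θ) * ρ
  let m55 : ℝ := l1 * (2 / (3 * R)) * Real.sqrt (2 / R) * auI * auII * μ ^ 2 / Real.sqrt θ
  let m56 : ℝ := l1 * (2 / (5 * R ^ 2)) * auII * atI * κ / θ
  let m66 : ℝ :=
    l1 * (32 / (75 * R ^ 2)) * Real.sqrt (2 / R) * atI * atII * κ ^ 2 / (θ * Real.sqrt θ)
  !![m11, 0,   m13, m14, m15, m16;
     0,   m22, m23, 0,   0,   0;
     m13, m23, m33, 0,   0,   0;
     m14, 0,   0,   m44, 0,   0;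
     m15, 0,   0,   0,   m55, m56;
     m16, 0,   0,   0,   m56, m66]

set_option maxHeartbeats 2000000 in
/-- **Verification of assumption (A) in the Navier-slip scaling regime (Remark 1.2).**
For fixed positive `R, ρ̄, θ̄, μ̄, κ̄` and positive constants `c₁, c₄`, there is
`ε₀ > 0` such that for every `0 < ε < ε₀`, taking the slip coefficients
`a_u^I = c₁`, `a_θ^{II} = c₄`, `a_θ^I = ε`, `a_u^{II} = ε`, assumption (A) holds:
the strict inequality (i) and the existence of `λ₀, λ₁ > 0` making the
6×6 matrix positive definite. -/
theorem assumptionA_navier_slip_regime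
    (R ρ θ μ κ c₁ c₄ : ℝ)
    (hR : 0 < R) (hρ : 0 < ρ) (hθ : 0 < θ) (hμ : 0 < μ) (hκ : 0 < κ)
    (hc₁ : 0 < c₁) (hc₄ : 0 < c₄) :
    ∃ ε₀ : ℝ, 0 < ε₀ ∧ ∀ ε : ℝ, 0 < ε → ε < ε₀ →
      (0 < 16 / (15 * R) * ε * (κ / θ) * ρ - 2 / (5 * R) * ε * ε * (κ / θ) * ρ) ∧
      ∃ l0 l1 : ℝ, 0 < l0 ∧ 0 < l1 ∧
        (slipMatrix R ρ θ μ κ c₁ ε ε c₄ l0 l1).PosDef := by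
  obtain ⟨s, hs, hsθ⟩ : ∃ s', 0 < s' ∧ Real.sqrt θ = s' :=
    ⟨_, Real.sqrt_pos.mpr hθ, rfl⟩
  obtain ⟨t, ht, htR⟩ : ∃ t', 0 < t' ∧ Real.sqrt (2 / R) = t' :=
    ⟨_, Real.sqrt_pos.mpr (by positivity), rfl⟩
  obtain ⟨A, hA, hA_def⟩ : ∃ a, 0 < a ∧ a = 2 * t * c₁ * μ ^ 2 / (3 * R * s) :=
    ⟨_, by positivity, rfl⟩
  obtain ⟨B, hB, hB_def⟩ : ∃ b, 0 < b ∧ b = 32 * t * c₄ * κ ^ 2 / (75 * R ^ 2 * θ * s) :=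
    ⟨_, by positivity, rfl⟩
  obtain ⟨D, hD, hD_def⟩ : ∃ d, 0 < d ∧ d = 16 * κ * ρ / (15 * R * θ) :=
    ⟨_, by positivity, rfl⟩
  obtain ⟨L, hL, hL_def⟩ : ∃ l, 0 < l ∧ l = 1 + 4 * μ ^ 2 / (A * R * θ) + 4 * R * ρ ^ 2 / (B * θ) :=
    ⟨_, by positivity, rfl⟩
  obtain ⟨K, hK, hK_def⟩ : ∃ k, 0 < k ∧ k = 2 * L * κ / (5 * R) :=
    ⟨_, by positivity, rfl⟩
  obtain ⟨J, hJ, hJ_def⟩ : ∃ j, 0 < j ∧ j = 2 * L * κ / (5 * R ^ 2 * θ) :=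
    ⟨_, by positivity, rfl⟩
  obtain ⟨Mc, hMc, hMc_def⟩ : ∃ m, 0 < m ∧
      m = 8 * L * A * (R * ρ * K + K ^ 2) + 2 * J ^ 2 * R * θ + 1 :=
    ⟨_, by positivity, rfl⟩
  -- key consequences of the choice of L
  have hARθ : (0:ℝ) < A * R * θ := by positivity
  have hBθ : (0:ℝ) < B * θ := by positivity
  have hLA : A * R * θ + 4 * μ ^ 2 ≤ L * (A * R * θ) := by
    have h1 : 4 * μ ^ 2 / (A * R * θ) * (A * R * θ) = 4 * μ ^ 2 :=
      div_mul_cancel₀ _ (ne_of_gt hARθ)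
    have h2 : 0 ≤ 4 * R * ρ ^ 2 / (B * θ) * (A * R * θ) := by positivity
    rw [hL_def]
    have e : (1 + 4 * μ ^ 2 / (A * R * θ) + 4 * R * ρ ^ 2 / (B * θ)) * (A * R * θ)
        = A * R * θ + 4 * μ ^ 2 / (A * R * θ) * (A * R * θ)
          + 4 * R * ρ ^ 2 / (B * θ) * (A * R * θ) := by ring
    rw [e, h1]
    linarith
  have hLB : B * θ + 4 * R * ρ ^ 2 ≤ L * (B * θ) := by
    have h1 : 4 * R * ρ ^ 2 / (B * θ) * (B * θ) = 4 * R * ρ ^ 2 :=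
      div_mul_cancel₀ _ (ne_of_gt hBθ)
    have h2 : 0 ≤ 4 * μ ^ 2 / (A * R * θ) * (B * θ) := by positivity
    rw [hL_def]
    have e : (1 + 4 * μ ^ 2 / (A * R * θ) + 4 * R * ρ ^ 2 / (B * θ)) * (B * θ)
        = B * θ + 4 * μ ^ 2 / (A * R * θ) * (B * θ)
          + 4 * R * ρ ^ 2 / (B * θ) * (B * θ) := by ring
    rw [e, h1]
    linarith
  have hLBR : B * θ * R + 4 * R ^ 2 * ρ ^ 2 ≤ L * B * R * θ := by
    have h := mul_le_mul_of_nonneg_right hLB hR.le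
    calc B * θ * R + 4 * R ^ 2 * ρ ^ 2 = (B * θ + 4 * R * ρ ^ 2) * R := by ring
      _ ≤ L * (B * θ) * R := h
      _ = L * B * R * θ := by ring
  refine ⟨min 1 (min (L * A * B * R * θ / Mc) (L * D * R * θ / (8 * K ^ 2 + 1))),
    by positivity, fun ε hε hεlt => ?_⟩
  have hε1 : ε < 1 := lt_of_lt_of_le hεlt (min_le_left _ _)
  have hε2 : ε * Mc < L * A * B * R * θ := by
    have h := lt_of_lt_of_le hεlt (le_trans (min_le_right _ _) (min_le_left _ _))
    exact (lt_div_iff₀ hMc).mp h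
  have hε3 : ε * (8 * K ^ 2 + 1) < L * D * R * θ := by
    have h := lt_of_lt_of_le hεlt (le_trans (min_le_right _ _) (min_le_right _ _))
    exact (lt_div_iff₀ (by positivity)).mp h
  have hεsq : ε * ε ≤ ε := by
    have h := mul_le_mul_of_nonneg_left hε1.le hε.le
    calc ε * ε ≤ ε * 1 := h
      _ = ε := mul_one ε
  constructor
  · have key : 16 / (15 * R) * ε * (κ / θ) * ρ - 2 / (5 * R) * ε * ε * (κ / θ) * ρ
        = ε * (κ / θ) * ρ * (1 / R) * (16 / 15 - 2 / 5 * ε) := by ring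
    rw [key]
    have h1 : (0:ℝ) < 16 / 15 - 2 / 5 * ε := by linarith
    have h2 : (0:ℝ) < κ / θ := by positivity
    have h3 : (0:ℝ) < 1 / R := by positivity
    exact mul_pos (mul_pos (mul_pos (mul_pos hε h2) hρ) h3) h1
  · refine ⟨L / ε, L / ε, by positivity, by positivity, ?_⟩
    have hεne : ε ≠ 0 := ne_of_gt hε
    have hRne : R ≠ 0 := ne_of_gt hR
    have hθne : θ ≠ 0 := ne_of_gt hθ
    have hsne : s ≠ 0 := ne_of_gt hs
    have hmat : slipMatrix R ρ θ μ κ c₁ ε ε c₄ (L / ε) (L / ε) =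
        !![R * θ, 0, 1 / 2 * R * ρ + K * ε, K * ε, 1 / 2 * μ, K * ε;
           0, L * A, J * ε, 0, 0, 0;
           1 / 2 * R * ρ + K * ε, J * ε, L * B, 0, 0, 0;
           K * ε, 0, 0, L * D, 0, 0;
           1 / 2 * μ, 0, 0, 0, L * A, J * ε;
           K * ε, 0, 0, 0, J * ε, L * B] := by
      unfold slipMatrix
      ext i j
      fin_cases i <;> fin_cases j <;>
        simp [hsθ, htR, cons_val_five, Matrix.vecHead, Matrix.vecTail] <;>
        simp only [hA_def, hB_def, hD_def, hK_def, hJ_def] <;>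
        field_simp <;> ring
    rw [hmat]
    have H11 : (0:ℝ) < R * θ := by positivity
    have H22 : (0:ℝ) < L * A := by positivity
    have H5 : 16 * (1 / 2 * μ) ^ 2 < L * A * (R * θ) := by
      have e : 16 * (1 / 2 * μ) ^ 2 = 4 * μ ^ 2 := by ring
      have e2 : L * (A * R * θ) = L * A * (R * θ) := by ring
      rw [e]
      linarith [hARθ, hLA]
    have H4 : 8 * (K * ε) ^ 2 < L * D * (R * θ) := by
      have e1 : 8 * (K * ε) ^ 2 = 8 * K ^ 2 * (ε * ε) := by ring
      have e2 : 8 * K ^ 2 * (ε * ε) ≤ 8 * K ^ 2 * ε :=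
        mul_le_mul_of_nonneg_left hεsq (by positivity)
      have e3 : ε * (8 * K ^ 2 + 1) = 8 * K ^ 2 * ε + ε := by ring
      have e4 : L * D * R * θ = L * D * (R * θ) := by ring
      linarith [e1, e2, e3, e4, hε3, hε]
    have H3 : 8 * (1 / 2 * R * ρ + K * ε) ^ 2 * (L * A) + 2 * (J * ε) ^ 2 * (R * θ)
        < L * B * (R * θ) * (L * A) := by
      have e2 : (8 * (L * A) * K ^ 2 + 2 * J ^ 2 * (R * θ)) * (ε * ε)
          ≤ (8 * (L * A) * K ^ 2 + 2 * J ^ 2 * (R * θ)) * ε :=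
        mul_le_mul_of_nonneg_left hεsq (by positivity)
      have h2 : (B * θ * R + 4 * R ^ 2 * ρ ^ 2) * (L * A) ≤ L * B * R * θ * (L * A) :=
        mul_le_mul_of_nonneg_right hLBR (by positivity)
      have h5 : (0:ℝ) ≤ L * A * (R ^ 2 * ρ ^ 2) := by positivity
      calc 8 * (1 / 2 * R * ρ + K * ε) ^ 2 * (L * A) + 2 * (J * ε) ^ 2 * (R * θ)
          = 2 * (L * A) * (R * ρ) ^ 2 + (8 * (L * A) * (R * ρ) * K) * ε
            + (8 * (L * A) * K ^ 2 + 2 * J ^ 2 * (R * θ)) * (ε * ε) := by ring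
        _ ≤ 2 * (L * A) * (R * ρ) ^ 2 + (8 * (L * A) * (R * ρ) * K) * ε
            + (8 * (L * A) * K ^ 2 + 2 * J ^ 2 * (R * θ)) * ε := by linarith
        _ = 2 * (L * A) * (R * ρ) ^ 2 + (ε * Mc - ε) := by rw [hMc_def]; ring
        _ < 2 * (L * A) * (R * ρ) ^ 2 + L * A * B * R * θ := by linarith
        _ ≤ L * B * (R * θ) * (L * A) := by
            have e1 : (B * θ * R + 4 * R ^ 2 * ρ ^ 2) * (L * A)
                = L * A * B * R * θ + 4 * (L * A * (R ^ 2 * ρ ^ 2)) := by ring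
            have e2 : L * B * R * θ * (L * A) = L * B * (R * θ) * (L * A) := by ring
            have e3 : 2 * (L * A) * (R * ρ) ^ 2 = 2 * (L * A * (R ^ 2 * ρ ^ 2)) := by ring
            linarith
    have H6 : 8 * (K * ε) ^ 2 * (L * A) + 2 * (J * ε) ^ 2 * (R * θ)
        < L * B * (R * θ) * (L * A) := by
      have h4 : (0:ℝ) ≤ 8 * (L * A) * (1 / 2 * R * ρ) * (1 / 2 * R * ρ + 2 * (K * ε)) := by
        positivity
      have e : 8 * (1 / 2 * R * ρ + K * ε) ^ 2 * (L * A)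
          = 8 * (K * ε) ^ 2 * (L * A)
            + 8 * (L * A) * (1 / 2 * R * ρ) * (1 / 2 * R * ρ + 2 * (K * ε)) := by ring
      linarith [H3, h4, e]
    exact posdef_aux (R * θ) (1 / 2 * R * ρ + K * ε) (K * ε) (1 / 2 * μ) (K * ε)
      (L * A) (J * ε) (L * B) (L * D) (L * A) (J * ε) (L * B)
      H11 H22 H22 H5 H3 H4 H6
end
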